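/- If Z(q) = q^{−C/24}·(1 + a₁q + a₂q² + …) solves the second-order equation [θ² + 2E₂θ − (5/4)C(C+4)E₄]Z = 0 (with the Eisenstein normalizations E₂ = −1/12 + 2Σσ₁(n)qⁿ, E₄ = 1/720 + (1/3)Σσ₃(n)qⁿ), then a₂ − 1 − a₁ = 5(5C+22)(C−1)(C+2)²/(2(C−22)(C−10)) for C ∉ {10, 22}. -/

import Mathlib

/-- Coefficients of the Eisenstein series `E₂ = -1/12 + 2∑σ₁(n)qⁿ`. -/
def e2 (n : ℕ) : ℚ :=
  if n = 0 then -1/12 else 2 * ∑ d ∈ n.divisors, (d : ℚ)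

/-- Coefficients of the Eisenstein series `E₄ = 1/720 + (1/3)∑σ₃(n)qⁿ`. -/
def e4 (n : ℕ) : ℚ :=
  if n = 0 then 1/720 else (1/3) * ∑ d ∈ n.divisors, (d : ℚ)^3

/-- The coefficient equations for `Z(q) = q^{-C/24} ∑ aₙ qⁿ` to solve the ODE
`[θ² + 2E₂θ - (5/4)C(C+4)E₄] Z = 0` with `θ = q d/dq`: for every `n`,
`(n - C/24)² aₙ + 2 ∑_{k≤n} e₂(k)(n-k-C/24)a_{n-k} - (5/4)C(C+4) ∑_{k≤n} e₄(k)a_{n-k} = 0`. -/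
def SolvesODE (C : ℚ) (a : ℕ → ℚ) : Prop :=
  ∀ n : ℕ,
    ((n : ℚ) - C/24)^2 * a n
      + 2 * ∑ k ∈ Finset.range (n + 1), e2 k * (((n : ℚ) - (k : ℚ)) - C/24) * a (n - k)
      - (5/4) * C * (C + 4) * ∑ k ∈ Finset.range (n + 1), e4 k * a (n - k) = 0

/-- If `Z(q) = q^{-C/24}(1 + a₁q + a₂q² + …)` solves the ODE, then
`a₂ - 1 - a₁ = 5(5C+22)(C-1)(C+2)²/(2(C-22)(C-10))` for `C ∉ {10, 22}`. -/
theorem a2_dimY_formula (C : ℚ) (hC10 : C ≠ 10) (hC22 : C ≠ 22) (a : ℕ → ℚ)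
    (h0 : a 0 = 1) (h : SolvesODE C a) :
    a 2 - 1 - a 1 =
      5 * (5 * C + 22) * (C - 1) * (C + 2)^2 / (2 * (C - 22) * (C - 10)) := by
  have he2_1 : e2 1 = 2 := by norm_num [e2, show Nat.divisors 1 = {1} from rfl]
  have he2_2 : e2 2 = 6 := by
    norm_num [e2, show Nat.divisors 2 = {1,2} from rfl, Finset.sum_insert]
  have he4_1 : e4 1 = 1/3 := by norm_num [e4, show Nat.divisors 1 = {1} from rfl]
  have he4_2 : e4 2 = 3 := by
    norm_num [e4, show Nat.divisors 2 = {1,2} from rfl, Finset.sum_insert]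
  have h1 := h 1
  have h2 := h 2
  simp only [Finset.sum_range_succ, Finset.sum_range_one, he2_1, he2_2, he4_1, he4_2,
    e2, e4, if_pos rfl, h0] at h1 h2
  norm_num at h1 h2
  have ha1 : a 1 * (10 - C) = C * (5 * C + 22) := by linear_combination 12 * h1
  have ha2 : a 2 * (22 - C) = 3 * C + (45/2) * C * (C + 4)
      - (24 - C - (5/2) * C * (C + 4)) * a 1 := by linear_combination 6 * h2
  rw [eq_div_iff (by
    intro hd
    rcases mul_eq_zero.mp hd with hd | hd
    · rcases mul_eq_zero.mp hd with hd | hd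
      · norm_num at hd
      · exact hC22 (by linarith [sub_eq_zero.mp hd])
    · exact hC10 (by linarith [sub_eq_zero.mp hd]))]
  linear_combination (5*C^2 + 24*C - 92) * ha1 - 2*(C-10) * ha2
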